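/- Let J be a graded ideal of the ring R = F_2[U,Q]/(Q^2), where deg U = 2 and deg Q = 1, such that the localization U^{-1}J equals U^{-1}R. Then there exist integers i ≥ j ≥ 0 such that J is the ideal generated by U^i and Q·U^j. -/
import Mathlib


open MvPolynomial

set_option synthInstance.maxHeartbeats 1000000
set_option maxHeartbeats 1000000

noncomputable section

/-- The ring `R = F₂[U,Q]/(Q²)`, where `U = X 0` and `Q = X 1`. -/
abbrev RUQ : Type :=
  MvPolynomial (Fin 2) (ZMod 2) ⧸
    Ideal.span {(X 1 : MvPolynomial (Fin 2) (ZMod 2)) ^ 2}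

/-- The quotient map. -/
noncomputable def mkR : MvPolynomial (Fin 2) (ZMod 2) →+* RUQ :=
  Ideal.Quotient.mk _

/-- The class of `U`. -/
noncomputable def U : RUQ := mkR (X 0)

/-- The class of `Q`. -/
noncomputable def Q : RUQ := mkR (X 1)

/-- The grading weights: `deg U = 2`, `deg Q = 1`. -/
def wt : Fin 2 → ℕ := ![2, 1]

/-- `x ∈ R` is homogeneous of degree `n` (with respect to `deg U = 2`, `deg Q = 1`)
if it is represented by a weighted homogeneous polynomial of degree `n`. -/
def IsHomog (x : RUQ) (n : ℕ) : Prop :=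
  ∃ p : MvPolynomial (Fin 2) (ZMod 2), p.IsWeightedHomogeneous wt n ∧ mkR p = x

/-- An ideal is graded if it is generated by its homogeneous elements. -/
def IsGradedIdeal (J : Ideal RUQ) : Prop :=
  J = Ideal.span {x : RUQ | x ∈ J ∧ ∃ n : ℕ, IsHomog x n}

lemma weight_eval (d : Fin 2 →₀ ℕ) :
    Finsupp.weight wt d = 2 * d 0 + d 1 := by
  classical
  rw [Finsupp.weight_apply, Finsupp.sum_fintype _ _ (fun i => by simp)]
  simp [Fin.sum_univ_two, wt]
  ring

lemma X1_sq_dvd {r : MvPolynomial (Fin 2) (ZMod 2)}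
    (h : ∀ d ∈ r.support, 2 ≤ d 1) : (X 1 : MvPolynomial (Fin 2) (ZMod 2)) ^ 2 ∣ r := by
  conv_rhs => rw [← r.support_sum_monomial_coeff]
  apply Finset.dvd_sum
  intro d hd
  have h2 : Finsupp.single (1 : Fin 2) 2 ≤ d := by
    rw [Finsupp.single_le_iff]; exact h d hd
  refine ⟨monomial (d - Finsupp.single 1 2) (coeff d r), ?_⟩
  rw [X_pow_eq_monomial, monomial_mul, one_mul, add_tsub_cancel_of_le h2]

lemma mkR_monomial (a b : ℕ) :
    mkR (monomial (Finsupp.single 0 a + Finsupp.single 1 b) (1 : ZMod 2)) = U ^ a * Q ^ b := by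
  have h : monomial (Finsupp.single (0 : Fin 2) a + Finsupp.single 1 b) (1 : ZMod 2)
      = X 0 ^ a * X 1 ^ b := by
    rw [X_pow_eq_monomial, X_pow_eq_monomial, monomial_mul, one_mul]
  rw [h, map_mul, map_pow, map_pow]
  rfl

lemma homog_form {x : RUQ} {n : ℕ} (h : IsHomog x n) :
    x = 0 ∨ (∃ m, x = U ^ m) ∨ ∃ m, x = Q * U ^ m := by
  classical
  obtain ⟨p, hp, rfl⟩ := h
  set d₀ : Fin 2 →₀ ℕ := Finsupp.single 0 (n / 2) + Finsupp.single 1 (n % 2) with hd₀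
  have hd₀0 : d₀ 0 = n / 2 := by simp [hd₀]
  have hd₀1 : d₀ 1 = n % 2 := by simp [hd₀]
  set c := coeff d₀ p with hc
  have key : mkR (p - monomial d₀ c) = 0 := by
    apply Ideal.Quotient.eq_zero_iff_mem.mpr
    apply Ideal.mem_span_singleton.mpr
    apply X1_sq_dvd
    intro d hd
    have hdne : coeff d (p - monomial d₀ c) ≠ 0 := mem_support_iff.mp hd
    rw [coeff_sub, coeff_monomial] at hdne
    by_cases hdd : d₀ = d
    · subst hdd; simp [hc] at hdne
    · rw [if_neg hdd, sub_zero] at hdne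
      have hdeg := hp hdne
      rw [weight_eval] at hdeg
      by_contra hlt
      push_neg at hlt
      apply hdd
      ext i
      fin_cases i
      · show d₀ 0 = d 0; rw [hd₀0]; omega
      · show d₀ 1 = d 1; rw [hd₀1]; omega
  have hpeq : mkR p = mkR (monomial d₀ c) := by
    have := sub_eq_zero.mp (by rwa [map_sub] at key)
    exact this
  have hc01 : ∀ z : ZMod 2, z = 0 ∨ z = 1 := by decide
  rcases hc01 c with h0 | h1
  · left; rw [hpeq, h0, monomial_zero, map_zero]
  · rw [hpeq, h1, hd₀, mkR_monomial]
    rcases Nat.mod_two_eq_zero_or_one n with he | ho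
    · right; left; exact ⟨n / 2, by rw [he, pow_zero, mul_one]⟩
    · right; right; exact ⟨n / 2, by rw [ho, pow_one, mul_comm]⟩

lemma exists_pow_mem {J : Ideal RUQ}
    (hloc : Ideal.map (algebraMap RUQ (Localization.Away U)) J = ⊤) :
    ∃ N, U ^ N ∈ J := by
  have h1 : (1 : Localization.Away U) ∈
      Ideal.map (algebraMap RUQ (Localization.Away U)) J := by
    rw [hloc]; trivial
  obtain ⟨⟨a, s⟩, hs⟩ :=
    (IsLocalization.mem_map_algebraMap_iff (Submonoid.powers U)
      (Localization.Away U)).mp h1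
  rw [one_mul] at hs
  obtain ⟨c, hc⟩ :=
    (IsLocalization.eq_iff_exists (Submonoid.powers U) (Localization.Away U)).mp hs
  obtain ⟨m, hm⟩ := c.2
  obtain ⟨k, hk⟩ := s.2
  refine ⟨m + k, ?_⟩
  have hmem : (c : RUQ) * (a : RUQ) ∈ J := J.mul_mem_left _ a.2
  simp only [] at hm hk
  have : U ^ (m + k) = (c : RUQ) * (a : RUQ) := by
    rw [pow_add, hm, hk]; exact hc
  rwa [this]

/-- a graded ideal `J` of `F₂[U,Q]/(Q²)` whose localization at powers of `U`
is the whole localized ring is of the form `(Uⁱ, Q·Uʲ)` for some `i ≥ j ≥ 0`. -/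
theorem stmt0 (J : Ideal RUQ) (hgraded : IsGradedIdeal J)
    (hloc : Ideal.map (algebraMap RUQ (Localization.Away U)) J = ⊤) :
    ∃ i j : ℕ, j ≤ i ∧ J = Ideal.span {U ^ i, Q * U ^ j} := by
  classical
  have hUex : ∃ m, U ^ m ∈ J := exists_pow_mem hloc
  set i := Nat.find hUex with hi
  have hUi : U ^ i ∈ J := Nat.find_spec hUex
  have hQex : ∃ m, Q * U ^ m ∈ J := ⟨i, J.mul_mem_left Q hUi⟩
  set j := Nat.find hQex with hj
  have hQj : Q * U ^ j ∈ J := Nat.find_spec hQex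
  have hji : j ≤ i := Nat.find_min' hQex (J.mul_mem_left Q hUi)
  refine ⟨i, j, hji, le_antisymm ?_ ?_⟩
  · conv_lhs => rw [hgraded]
    apply Ideal.span_le.mpr
    rintro x ⟨hxJ, n, hx⟩
    rcases homog_form hx with rfl | ⟨m, rfl⟩ | ⟨m, rfl⟩
    · exact zero_mem _
    · have him : i ≤ m := Nat.find_min' hUex hxJ
      have h1 : U ^ m = U ^ (m - i) * U ^ i := by
        rw [← pow_add, Nat.sub_add_cancel him]
      rw [h1]
      exact Ideal.mul_mem_left _ _ (Ideal.subset_span (Or.inl rfl))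
    · have hjm : j ≤ m := Nat.find_min' hQex hxJ
      have h2 : U ^ m = U ^ (m - j) * U ^ j := by
        rw [← pow_add, Nat.sub_add_cancel hjm]
      have h1 : Q * U ^ m = U ^ (m - j) * (Q * U ^ j) := by
        rw [h2]; ring
      rw [h1]
      exact Ideal.mul_mem_left _ _ (Ideal.subset_span (Or.inr rfl))
  · apply Ideal.span_le.mpr
    rintro x (rfl | rfl)
    · exact hUi
    · exact hQj
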